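/- Combining the perturbation identity with the curvature bound: for the simplex witness S with gain β and regular simplex vertices v_k, and for any μ, the alignment loss satisfies KL(T ‖ S(z_T + d)) ≤ (β²/2) Σ_k (v_k·d)² ≤ (β² K)/(2(K−1)) ‖d‖², where d = μ − z_T and the second inequality uses the Gram structure of the regular simplex (the matrix V^T V with rows v_k has operator norm K/(K−1) on the relevant subspace). -/

import Mathlib

open Finset

/-- Dot product on `Fin n → ℝ`. -/
def dot {n : ℕ} (u v : Fin n → ℝ) : ℝ := ∑ i, u i * v i

/-- KL divergence between two finite probability vectors. -/
noncomputable def KL {K : ℕ} (p q : Fin K → ℝ) : ℝ :=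
  ∑ k, p k * Real.log (p k / q k)

lemma log_sum_exp_bound {K : ℕ} (hK : 0 < K) (T δ : Fin K → ℝ)
    (hT0 : ∀ k, 0 < T k) (hT1 : ∑ k, T k = 1) :
    Real.log (∑ k, T k * Real.exp (δ k)) ≤ (∑ k, T k * δ k) + (1/2) * ∑ k, (δ k) ^ 2 := by
  haveI : Nonempty (Fin K) := Fin.pos_iff_nonempty.mp hK
  set B : ℝ := ∑ k, (δ k) ^ 2 with hBdef
  set a : ℝ := ∑ k, T k * δ k with hadef
  set h : ℝ → ℝ := fun t => ∑ k, T k * Real.exp (t * δ k) with hhdef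
  set h1 : ℝ → ℝ := fun t => ∑ k, T k * δ k * Real.exp (t * δ k) with h1def
  set h2 : ℝ → ℝ := fun t => ∑ k, T k * (δ k) ^ 2 * Real.exp (t * δ k) with h2def
  have hpos : ∀ t, 0 < h t := by
    intro t
    exact Finset.sum_pos (fun k _ => mul_pos (hT0 k) (Real.exp_pos _)) univ_nonempty
  have hd1 : ∀ t, HasDerivAt h (h1 t) t := by
    intro t
    have : HasDerivAt (fun t => ∑ k, T k * Real.exp (t * δ k))
        (∑ k, T k * (Real.exp (t * δ k) * δ k)) t := by
      apply HasDerivAt.fun_sum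
      intro k _
      exact ((hasDerivAt_mul_const (δ k)).exp).const_mul (T k)
    convert this using 1
    rw [h1def]
    exact Finset.sum_congr rfl fun k _ => by ring
  have hd2 : ∀ t, HasDerivAt h1 (h2 t) t := by
    intro t
    have : HasDerivAt (fun t => ∑ k, T k * δ k * Real.exp (t * δ k))
        (∑ k, T k * δ k * (Real.exp (t * δ k) * δ k)) t := by
      apply HasDerivAt.fun_sum
      intro k _
      exact ((hasDerivAt_mul_const (δ k)).exp).const_mul (T k * δ k)
    convert this using 1
    rw [h2def]
    exact Finset.sum_congr rfl fun k _ => by ring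
  have hBle : ∀ k, (δ k) ^ 2 ≤ B := by
    intro k
    exact Finset.single_le_sum (f := fun k => (δ k) ^ 2) (fun j _ => sq_nonneg _) (mem_univ k)
  have h2le : ∀ t, h2 t ≤ B * h t := by
    intro t
    rw [h2def, hhdef]
    rw [Finset.mul_sum]
    apply Finset.sum_le_sum
    intro k _
    have := hBle k
    have he : 0 < Real.exp (t * δ k) := Real.exp_pos _
    nlinarith [ (hT0 k).le, mul_pos (hT0 k) he ]
  -- φ := h1/h - a - t*B is antitone (derivative nonpositive everywhere)
  set φ : ℝ → ℝ := fun t => h1 t / h t - (a + t * B) with hφdef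
  have hφd : ∀ t, HasDerivAt φ ((h2 t * h t - h1 t * h1 t) / (h t) ^ 2 - B) t := by
    intro t
    have hdiv : HasDerivAt (fun t => h1 t / h t)
        ((h2 t * h t - h1 t * h1 t) / (h t) ^ 2) t :=
      (hd2 t).div (hd1 t) (hpos t).ne'
    have hlin : HasDerivAt (fun t : ℝ => a + t * B) (B) t := by
      simpa using ((hasDerivAt_mul_const B).const_add a)
    exact hdiv.sub hlin
  have hφ'le : ∀ t, (h2 t * h t - h1 t * h1 t) / (h t) ^ 2 - B ≤ 0 := by
    intro t
    have hsq : (0:ℝ) < (h t) ^ 2 := pow_pos (hpos t) 2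
    rw [sub_nonpos, div_le_iff₀ hsq]
    nlinarith [h2le t, hpos t, sq_nonneg (h1 t)]
  have hφanti : Antitone φ := antitone_of_hasDerivAt_nonpos hφd hφ'le
  have hh0 : h 0 = 1 := by
    rw [hhdef]; simp [hT1]
  have hh10 : h1 0 = a := by
    rw [h1def, hadef]; simp
  have hφ0 : φ 0 = 0 := by
    rw [hφdef]; simp [hh0, hh10]
  have hφle : ∀ t ∈ Set.Icc (0:ℝ) 1, φ t ≤ 0 := by
    intro t ht
    calc φ t ≤ φ 0 := hφanti ht.1
    _ = 0 := hφ0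
  -- G := log h - t a - t²/2 B is antitone on [0,1]
  set G : ℝ → ℝ := fun t => Real.log (h t) - (t * a + t ^ 2 / 2 * B) with hGdef
  have hGd : ∀ t, HasDerivAt G (φ t) t := by
    intro t
    have hlog : HasDerivAt (fun t => Real.log (h t)) (h1 t / h t) t :=
      (hd1 t).log (hpos t).ne'
    have hlin : HasDerivAt (fun t : ℝ => t * a + t ^ 2 / 2 * B) (a + t * B) t := by
      have h1' : HasDerivAt (fun t : ℝ => t * a) a t := hasDerivAt_mul_const a
      have h2' : HasDerivAt (fun t : ℝ => t ^ 2 / 2 * B) (t * B) t := by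
        have : HasDerivAt (fun t : ℝ => t ^ 2) (2 * t) t := by
          simpa using hasDerivAt_pow 2 t
        have := (this.div_const 2).mul_const B
        rw [show t * B = 2 * t / 2 * B by ring]
        exact this
      exact h1'.add h2'
    exact hlog.sub hlin
  have hGanti : AntitoneOn G (Set.Icc (0:ℝ) 1) := by
    apply antitoneOn_of_hasDerivWithinAt_nonpos (convex_Icc 0 1)
      (fun t _ => ((hGd t).continuousAt).continuousWithinAt)
      (f' := φ) (fun t _ => (hGd t).hasDerivWithinAt)
    intro t ht
    rw [interior_Icc] at ht
    exact hφle t ⟨ht.1.le, ht.2.le⟩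
  have hG1 : G 1 ≤ G 0 := hGanti (Set.mem_Icc.mpr ⟨le_refl 0, zero_le_one⟩)
      (Set.mem_Icc.mpr ⟨zero_le_one, le_refl 1⟩) zero_le_one
  have hG0 : G 0 = 0 := by rw [hGdef]; simp [hh0]
  have hh1 : h 1 = ∑ k, T k * Real.exp (δ k) := by rw [hhdef]; simp
  rw [hG0, hGdef] at hG1
  simp only [hh1] at hG1
  linarith [hG1]

lemma dot_add_right {n : ℕ} (u x y : Fin n → ℝ) : dot u (x + y) = dot u x + dot u y := by
  unfold dot
  rw [← Finset.sum_add_distrib]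
  exact Finset.sum_congr rfl fun i _ => by simp [mul_add]

lemma simplex_gram_bound {K dz : ℕ} (hK : 2 ≤ K)
    (v : Fin K → Fin dz → ℝ)
    (hvsum : ∑ k, v k = 0)
    (hvnorm : ∀ i, dot (v i) (v i) = 1)
    (hvcross : ∀ i j, i ≠ j → dot (v i) (v j) = -1 / ((K : ℝ) - 1))
    (d : Fin dz → ℝ) :
    ∑ k, (dot (v k) d) ^ 2 ≤ (K : ℝ) / ((K : ℝ) - 1) * ∑ i, (d i) ^ 2 := by
  have hK1 : (1:ℝ) < (K:ℝ) := by
    have : (2:ℝ) ≤ (K:ℝ) := by exact_mod_cast hK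
    linarith
  set c : ℝ := -1 / ((K : ℝ) - 1) with hcdef
  set a : Fin K → ℝ := fun k => dot (v k) d with hadef
  set S : ℝ := ∑ k, (a k) ^ 2 with hSdef
  set D : ℝ := ∑ i, (d i) ^ 2 with hDdef
  have hSnn : 0 ≤ S := Finset.sum_nonneg fun k _ => sq_nonneg _
  have hDnn : 0 ≤ D := Finset.sum_nonneg fun i _ => sq_nonneg _
  have hsuma : ∑ k, a k = 0 := by
    rw [hadef]
    simp only [dot]
    rw [Finset.sum_comm]
    have : ∀ i, ∑ k, v k i * d i = 0 := by
      intro i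
      rw [← Finset.sum_mul]
      have : (∑ k, v k) i = 0 := by rw [hvsum]; rfl
      rw [Finset.sum_apply] at this
      rw [this, zero_mul]
    simp [this]
  set w : Fin dz → ℝ := fun i => ∑ k, a k * v k i with hwdef
  have hwd : ∑ i, w i * d i = S := by
    rw [hSdef, hwdef]
    simp only [Finset.sum_mul]
    rw [Finset.sum_comm]
    apply Finset.sum_congr rfl
    intro k _
    have : ∑ i, a k * v k i * d i = a k * ∑ i, v k i * d i := by
      rw [Finset.mul_sum]; exact Finset.sum_congr rfl fun i _ => by ring
    rw [this]
    rw [hadef]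
    simp only [dot]
    ring
  have hgram : ∀ k j : Fin K, dot (v k) (v j) = c + (if k = j then 1 - c else 0) := by
    intro k j
    by_cases h : k = j
    · subst h; rw [hvnorm]; simp
    · rw [hvcross k j h]; simp [h, hcdef]
  have hww : ∑ i, w i ^ 2 = (1 - c) * S := by
    have expand : ∑ i, w i ^ 2 = ∑ k, ∑ j, a k * a j * dot (v k) (v j) := by
      simp only [hwdef, sq, Finset.sum_mul_sum]
      rw [Finset.sum_comm]
      apply Finset.sum_congr rfl
      intro k _
      rw [Finset.sum_comm]
      apply Finset.sum_congr rfl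
      intro j _
      simp only [dot, Finset.mul_sum]
      apply Finset.sum_congr rfl
      intro i _
      ring
    rw [expand]
    have : ∀ k : Fin K, ∑ j, a k * a j * dot (v k) (v j)
        = (∑ j, a k * a j * c) + a k * a k * (1 - c) := by
      intro k
      simp only [hgram, mul_add, Finset.sum_add_distrib]
      congr 1
      simp [mul_ite, mul_zero, Finset.sum_ite_eq]
    simp only [this, Finset.sum_add_distrib]
    have e1 : ∑ k, ∑ j, a k * a j * c = 0 := by
      have : ∀ k, ∑ j, a k * a j * c = a k * c * ∑ j, a j := by
        intro k; rw [Finset.mul_sum]; exact Finset.sum_congr rfl fun j _ => by ring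
      simp [this, hsuma]
    rw [e1, zero_add, hSdef, Finset.mul_sum]
    apply Finset.sum_congr rfl
    intro k _
    ring
  have hCS : S ^ 2 ≤ ((1 - c) * S) * D := by
    calc S ^ 2 = (∑ i, w i * d i) ^ 2 := by rw [hwd]
    _ ≤ (∑ i, w i ^ 2) * ∑ i, (d i) ^ 2 := Finset.sum_mul_sq_le_sq_mul_sq _ _ _
    _ = ((1 - c) * S) * D := by rw [hww, hDdef]
  have h1c : 1 - c = (K : ℝ) / ((K : ℝ) - 1) := by
    have hne : (K:ℝ) - 1 ≠ 0 := by linarith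
    rw [hcdef]
    field_simp
    ring
  rw [h1c] at hCS
  rcases eq_or_lt_of_le hSnn with h | h
  · rw [← h]
    have hd : 0 < (K:ℝ)/((K:ℝ)-1) := by apply div_pos <;> linarith
    exact mul_nonneg hd.le hDnn
  · nlinarith [hCS, h]

/-- Distance-to-target bound: for the simplex witness `S` with gain `β` and `d = μ − z_T`,
`KL(T ‖ S(z_T + d)) ≤ (β²/2) ∑_k (v_k·d)² ≤ (β² K)/(2(K−1)) ‖d‖²`. -/
theorem alignment_distance_bound {K dz : ℕ} (hK : 2 ≤ K)
    (β : ℝ) (hβ : 0 < β)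
    (v : Fin K → Fin dz → ℝ)
    (hvsum : ∑ k, v k = 0)
    (hvnorm : ∀ i, dot (v i) (v i) = 1)
    (hvcross : ∀ i j, i ≠ j → dot (v i) (v j) = -1 / ((K : ℝ) - 1))
    (T Tbar : Fin K → ℝ)
    (hT0 : ∀ k, 0 < T k) (hT1 : ∑ k, T k = 1)
    (hTbar0 : ∀ k, 0 < Tbar k) (hTbar1 : ∑ k, Tbar k = 1)
    (S : (Fin dz → ℝ) → Fin K → ℝ)
    (hS : ∀ z k, S z k =
      Real.exp (β * dot (v k) z + Real.log (Tbar k)) /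
        ∑ j, Real.exp (β * dot (v j) z + Real.log (Tbar j)))
    (zT : Fin dz → ℝ) (hzT : ∀ k, S zT k = T k)
    (d : Fin dz → ℝ) :
    KL T (S (zT + d)) ≤ (β ^ 2 / 2) * ∑ k, (dot (v k) d) ^ 2
      ∧ (β ^ 2 / 2) * ∑ k, (dot (v k) d) ^ 2
          ≤ (β ^ 2 * (K : ℝ)) / (2 * ((K : ℝ) - 1)) * ∑ i, (d i) ^ 2 := by
  have hKpos : 0 < K := lt_of_lt_of_le two_pos hK
  haveI : Nonempty (Fin K) := Fin.pos_iff_nonempty.mp hKpos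
  set δ : Fin K → ℝ := fun k => β * dot (v k) d with hδdef
  set Z : ℝ := ∑ j, Real.exp (β * dot (v j) zT + Real.log (Tbar j)) with hZdef
  have hZpos : 0 < Z :=
    Finset.sum_pos (fun j _ => Real.exp_pos _) univ_nonempty
  have hEZ : ∀ k, Real.exp (β * dot (v k) zT + Real.log (Tbar k)) = T k * Z := by
    intro k
    have h := hzT k
    rw [hS zT k] at h
    rw [div_eq_iff hZpos.ne'] at h
    exact h
  set W : ℝ := ∑ j, T j * Real.exp (δ j) with hWdef
  have hWpos : 0 < W :=
    Finset.sum_pos (fun j _ => mul_pos (hT0 j) (Real.exp_pos _)) univ_nonempty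
  have hSd : ∀ k, S (zT + d) k = T k * Real.exp (δ k) / W := by
    intro k
    rw [hS]
    have harg : ∀ j : Fin K, β * dot (v j) (zT + d) + Real.log (Tbar j)
        = (β * dot (v j) zT + Real.log (Tbar j)) + δ j := by
      intro j; rw [dot_add_right]; simp only [hδdef]; ring
    simp only [harg, Real.exp_add, hEZ]
    have hden : ∑ j, T j * Z * Real.exp (δ j) = Z * W := by
      rw [hWdef, Finset.mul_sum]
      exact Finset.sum_congr rfl fun j _ => by ring
    rw [hden]
    have hZ' : Z ≠ 0 := hZpos.ne'
    have hW' : W ≠ 0 := hWpos.ne'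
    field_simp
  have hKL : KL T (S (zT + d)) = Real.log W - ∑ k, T k * δ k := by
    unfold KL
    have hterm : ∀ k : Fin K, T k * Real.log (T k / (T k * Real.exp (δ k) / W))
        = T k * Real.log W - T k * δ k := by
      intro k
      have hq : T k / (T k * Real.exp (δ k) / W) = W / Real.exp (δ k) := by
        rw [div_div_eq_mul_div]
        rw [div_eq_div_iff (mul_pos (hT0 k) (Real.exp_pos _)).ne' (Real.exp_pos _).ne']
        ring
      rw [hq, Real.log_div hWpos.ne' (Real.exp_ne_zero _), Real.log_exp]
      ring
    simp only [hSd, hterm]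
    rw [Finset.sum_sub_distrib, ← Finset.sum_mul, hT1, one_mul]
  constructor
  · have h1 := log_sum_exp_bound hKpos T δ hT0 hT1
    have hδsq : ∑ k, (δ k) ^ 2 = β ^ 2 * ∑ k, (dot (v k) d) ^ 2 := by
      rw [Finset.mul_sum]
      exact Finset.sum_congr rfl fun k _ => by simp only [hδdef]; ring
    rw [hKL]
    rw [hδsq] at h1
    rw [← hWdef] at h1
    linarith
  · have h2 := simplex_gram_bound hK v hvsum hvnorm hvcross d
    have hfac : (β ^ 2 * (K : ℝ)) / (2 * ((K : ℝ) - 1))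
        = (β ^ 2 / 2) * ((K : ℝ) / ((K : ℝ) - 1)) := by
      rw [div_mul_div_comm]
    rw [hfac, mul_assoc]
    exact mul_le_mul_of_nonneg_left h2 (by positivity)
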